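/- Let G be a graph, and let X, Y be disjoint sets of vertices, each of size k ≥ 1, with G[X] and G[Y] connected, and suppose the distance d(X,Y) between X and Y in G is positive and finite. Then there exist vertices u ∉ X and v ∈ X such that the set X' = (X ∪ {u}) \ {v} has size k, G[X'] is connected, and d(X', Y) < d(X, Y). -/

import Mathlib

/-- The (extended) distance between two finite vertex sets: the minimum over pairs of
the graph extended distance. -/
noncomputable def setEDist {V : Type*} (G : SimpleGraph V) (A B : Finset V) : ℕ∞ :=
  (A ×ˢ B).inf fun p => G.edist p.1 p.2

/-- The inclusion homomorphism from an induced subgraph. -/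
def inclHom {V : Type*} (G : SimpleGraph V) (s : Set V) : G.induce s →g G :=
  ⟨Subtype.val, fun h => h⟩

/-- A finite connected graph with at least two vertices has, for any vertex `u`,
a vertex `v ≠ u` whose removal keeps the graph connected. -/
lemma exists_noncut {V : Type*} [Fintype V] (G : SimpleGraph V)
    (S : Set V) (hconn : (G.induce S).Connected) {u x : V} (hu : u ∈ S) (hx : x ∈ S)
    (hxu : x ≠ u) :
    ∃ v ∈ S, v ≠ u ∧ (G.induce (S \ {v})).Connected := by
  classical
  haveI : Fintype S := (Set.toFinite S).fintype
  set H := G.induce S with hH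
  let u₀ : S := ⟨u, hu⟩
  let x₀ : S := ⟨x, hx⟩
  have hx₀ : x₀ ∈ (Finset.univ : Finset S).erase u₀ := by
    refine Finset.mem_erase.mpr ⟨?_, Finset.mem_univ _⟩
    intro h
    exact hxu (congrArg Subtype.val h)
  obtain ⟨v₀, hv₀mem, hv₀max⟩ :=
    Finset.exists_max_image ((Finset.univ : Finset S).erase u₀)
      (fun w => H.dist u₀ w) ⟨x₀, hx₀⟩
  have hv₀u : v₀ ≠ u₀ := (Finset.mem_erase.mp hv₀mem).1
  -- every vertex can be reached from u₀ avoiding v₀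
  have key : ∀ w : S, w ≠ v₀ → ∃ p : H.Walk u₀ w, v₀ ∉ p.support := by
    intro w hw
    by_cases hwu : w = u₀
    · subst hwu
      refine ⟨SimpleGraph.Walk.nil, ?_⟩
      simp only [SimpleGraph.Walk.support_nil, List.mem_singleton]
      exact hv₀u
    · obtain ⟨p, hp⟩ := (hconn u₀ w).exists_walk_length_eq_dist
      refine ⟨p, fun hmem => ?_⟩
      have hspec := p.take_spec hmem
      have hlen : (p.takeUntil v₀ hmem).length + (p.dropUntil v₀ hmem).length = p.length := by
        conv_rhs => rw [← hspec]
        rw [SimpleGraph.Walk.length_append]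
      have h1 : H.dist u₀ v₀ ≤ (p.takeUntil v₀ hmem).length := SimpleGraph.dist_le _
      have h2 : 1 ≤ (p.dropUntil v₀ hmem).length := by
        by_contra h
        push_neg at h
        interval_cases h' : (p.dropUntil v₀ hmem).length
        exact hw (SimpleGraph.Walk.eq_of_length_eq_zero h').symm
      have h3 : H.dist u₀ w ≤ H.dist u₀ v₀ := by
        refine hv₀max w (Finset.mem_erase.mpr ⟨hwu, Finset.mem_univ _⟩)
      omega
  refine ⟨v₀.1, v₀.2, fun h => hv₀u (Subtype.ext h), ?_⟩
  have huS : u ∈ S \ {v₀.1} := ⟨hu, fun h => hv₀u (Subtype.ext (Set.mem_singleton_iff.mp h).symm)⟩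
  apply G.induce_connected_of_patches u huS
  intro w hw
  have hwS : w ∈ S := hw.1
  have hwv : (⟨w, hwS⟩ : S) ≠ v₀ := by
    intro h
    exact hw.2 (by simpa using congrArg Subtype.val h)
  obtain ⟨p, hps⟩ := key ⟨w, hwS⟩ hwv
  let p' : G.Walk u w := p.map (inclHom G S)
  have hsupp : ∀ z ∈ p'.support, z ∈ S \ {v₀.1} := by
    intro z hz
    rw [show p'.support = (p.map (inclHom G S)).support from rfl, SimpleGraph.Walk.support_map, List.mem_map] at hz
    obtain ⟨a, ha, rfl⟩ := hz
    refine ⟨a.2, fun h => hps ?_⟩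
    have : a = v₀ := Subtype.ext h
    rwa [this] at ha
  refine ⟨{z | z ∈ p'.support}, hsupp, p'.start_mem_support, p'.end_mem_support, ?_⟩
  exact (p'.connected_induce_support).preconnected _ _

theorem stmt_4 {V : Type*} [Fintype V] [DecidableEq V] (G : SimpleGraph V)
    (X Y : Finset V) (k : ℕ) (hk : 1 ≤ k)
    (hXcard : X.card = k) (hYcard : Y.card = k) (hdisj : Disjoint X Y)
    (hXconn : (G.induce (X : Set V)).Connected)
    (hYconn : (G.induce (Y : Set V)).Connected)
    (hpos : 0 < setEDist G X Y) (hfin : setEDist G X Y < ⊤) :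
    ∃ u ∉ X, ∃ v ∈ X,
      ((insert u X).erase v).card = k ∧
      (G.induce (((insert u X).erase v : Finset V) : Set V)).Connected ∧
      setEDist G ((insert u X).erase v) Y < setEDist G X Y := by
  classical
  have hne : (X ×ˢ Y).Nonempty := by
    by_contra h
    rw [Finset.not_nonempty_iff_eq_empty] at h
    simp [setEDist, h] at hfin
  obtain ⟨⟨x, y⟩, hxy, hmin⟩ := Finset.exists_mem_eq_inf (X ×ˢ Y) hne
    (fun p => G.edist p.1 p.2)
  rw [Finset.mem_product] at hxy
  obtain ⟨hx, hy⟩ := hxy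
  have hmin' : setEDist G X Y = G.edist x y := hmin
  rw [hmin'] at hpos hfin
  obtain ⟨p, hp⟩ := SimpleGraph.exists_walk_of_edist_ne_top (G := G) (u := x) (v := y) hfin.ne
  cases p with
  | nil =>
    simp only [SimpleGraph.Walk.length_nil, Nat.cast_zero] at hp
    rw [← hp] at hpos
    exact absurd hpos (lt_irrefl _)
  | @cons _ u _ hadj q =>
    -- hadj : G.Adj x u, q : G.Walk u y
    have hqlen : (q.length : ℕ∞) + 1 = G.edist x y := by
      rw [← hp, SimpleGraph.Walk.length_cons]
      push_cast
      ring
    have hlt : (q.length : ℕ∞) < G.edist x y := by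
      rw [← hqlen]
      exact ENat.lt_add_one_iff (by simp) |>.mpr le_rfl
    have huy : G.edist u y ≤ (q.length : ℕ∞) := SimpleGraph.edist_le q
    have huX : u ∉ X := by
      intro huX
      have hmem : (u, y) ∈ X ×ˢ Y := Finset.mem_product.mpr ⟨huX, hy⟩
      have h1 : setEDist G X Y ≤ G.edist u y := Finset.inf_le hmem
      rw [hmin'] at h1
      exact absurd (h1.trans_lt (huy.trans_lt hlt)) (lt_irrefl _)
    -- the induced graph on insert u X is connected
    have hSconn : (G.induce ((insert u X : Finset V) : Set V)).Connected := by
      have h1 : (G.induce ({u} : Set V)).Connected := by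
        rw [SimpleGraph.connected_iff]
        refine ⟨fun a b => ?_, ⟨⟨u, rfl⟩⟩⟩
        have : a = b := Subtype.ext (a.2.trans b.2.symm)
        rw [this]
      have h2 := SimpleGraph.connected_induce_union hXconn.preconnected h1.preconnected hx rfl hadj
      have : ((insert u X : Finset V) : Set V) = (X : Set V) ∪ {u} := by
        rw [Finset.coe_insert, Set.insert_eq, Set.union_comm]
      rw [this]
      exact h2
    have hxu : x ≠ u := fun h => huX (h ▸ hx)
    obtain ⟨v, hvS, hvu, hvconn⟩ := exists_noncut G ((insert u X : Finset V) : Set V)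
      hSconn (by simp) (by simp [hx]) hxu
    have hvX : v ∈ X := by
      rcases Finset.mem_insert.mp (by exact_mod_cast hvS) with h | h
      · exact absurd h hvu
      · exact h
    refine ⟨u, huX, v, hvX, ?_, ?_, ?_⟩
    · rw [Finset.card_erase_of_mem (Finset.mem_insert_of_mem hvX),
        Finset.card_insert_of_notMem huX, hXcard]
      omega
    · rw [Finset.coe_erase]
      exact hvconn
    · have huX' : u ∈ (insert u X).erase v :=
        Finset.mem_erase.mpr ⟨fun h => hvu h.symm, Finset.mem_insert_self _ _⟩
      have hmem : (u, y) ∈ (insert u X).erase v ×ˢ Y := Finset.mem_product.mpr ⟨huX', hy⟩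
      have h1 : setEDist G ((insert u X).erase v) Y ≤ G.edist u y := Finset.inf_le hmem
      calc setEDist G ((insert u X).erase v) Y ≤ G.edist u y := h1
        _ ≤ (q.length : ℕ∞) := huy
        _ < G.edist x y := hlt
        _ = setEDist G X Y := hmin'.symm
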